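/- Let Φ assign to each q in the Banach space C([0,2π],ℝ) its fundamental matrix Φ_q. The map C([0,2π],ℝ) → M₂(ℝ), q ↦ Φ_q(2π), is infinitely Fréchet differentiable, and its Fréchet derivative at q is the continuous linear map w ↦ Φ_q(2π)·∫₀^{2π} w(t)·Φ_q(t)⁻¹·N₀·Φ_q(t) dt. -/

import Mathlib

open Real Set Matrix

attribute [local instance] Matrix.normedAddCommGroup Matrix.normedSpace

set_option maxHeartbeats 1000000
set_option synthInstance.maxHeartbeats 400000

noncomputable section

/-- The matrix `N₀ = [[0,0],[1,0]]`. -/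
def N0 : Matrix (Fin 2) (Fin 2) ℝ := !![0, 0; 1, 0]

/-- Clamping map `ℝ → [0, 2π]`; it is the identity on `[0, 2π]`. -/
def clamp (t : ℝ) : Icc (0:ℝ) (2 * π) := Set.projIcc 0 (2 * π) (by positivity) t

abbrev M2 : Type := Matrix (Fin 2) (Fin 2) ℝ

section

abbrev M2nacg : NormedAddCommGroup (Matrix (Fin 2) (Fin 2) ℝ) :=
  { Matrix.normedAddCommGroup with
    toAddCommGroup := Matrix.addCommGroup
    toMetricSpace := @MetricSpace.replaceTopology _ instTopologicalSpaceMatrix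
      Matrix.normedAddCommGroup.toMetricSpace rfl }

abbrev M2ns :
    @NormedSpace ℝ (Matrix (Fin 2) (Fin 2) ℝ) _ M2nacg.toSeminormedAddCommGroup :=
  { (Matrix.module : Module ℝ (Matrix (Fin 2) (Fin 2) ℝ)) with
    norm_smul_le := Matrix.normedSpace.norm_smul_le }

attribute [local instance high] M2nacg M2ns


lemma M2.norm_le_iff {r : ℝ} (hr : 0 ≤ r) {A : M2} : ‖A‖ ≤ r ↔ ∀ i j, ‖A i j‖ ≤ r :=
  Matrix.norm_le_iff hr

lemma M2.entry_le (A : M2) (i j : Fin 2) : ‖A i j‖ ≤ ‖A‖ :=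
  Matrix.norm_entry_le_entrywise_sup_norm A

lemma M2.norm_mul_le (A B : M2) : ‖A * B‖ ≤ 2 * ‖A‖ * ‖B‖ := by
  rw [M2.norm_le_iff (by positivity)]
  intro i j
  rw [Matrix.mul_apply, Fin.sum_univ_two]
  have h1 : ‖A i 0 * B 0 j + A i 1 * B 1 j‖ ≤ ‖A i 0‖ * ‖B 0 j‖ + ‖A i 1‖ * ‖B 1 j‖ := by
    refine (norm_add_le _ _).trans ?_
    simp [norm_mul]
  refine h1.trans ?_
  have h2 : ‖A i 0‖ * ‖B 0 j‖ ≤ ‖A‖ * ‖B‖ :=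
    mul_le_mul (M2.entry_le A i 0) (M2.entry_le B 0 j) (norm_nonneg _) (norm_nonneg _)
  have h3 : ‖A i 1‖ * ‖B 1 j‖ ≤ ‖A‖ * ‖B‖ :=
    mul_le_mul (M2.entry_le A i 1) (M2.entry_le B 1 j) (norm_nonneg _) (norm_nonneg _)
  nlinarith [h2, h3]

lemma M2.norm_one_le : ‖(1 : M2)‖ ≤ 1 := by
  rw [M2.norm_le_iff zero_le_one]
  intro i j
  by_cases h : i = j <;> simp [Matrix.one_apply, h]

/-- matrix multiplication as a continuous bilinear map -/
def mulCLM : M2 →L[ℝ] M2 →L[ℝ] M2 :=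
  LinearMap.mkContinuous₂
    (LinearMap.mk₂ ℝ (fun A B => A * B) (fun _ _ _ => add_mul _ _ _)
      (fun c A B => by simp [Matrix.smul_mul]) (fun _ _ _ => mul_add _ _ _)
      (fun c A B => by simp [Matrix.mul_smul]))
    2 (fun A B => by simpa [mul_assoc] using M2.norm_mul_le A B)

@[simp] lemma mulCLM_apply (A B : M2) : mulCLM A B = A * B := rfl

lemma N0_norm_le : ‖N0‖ ≤ 1 := by
  rw [M2.norm_le_iff zero_le_one]
  intro i j
  fin_cases i <;> fin_cases j <;> norm_num [N0]

/-- the adjugate of a 2×2 matrix, as a linear map -/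
def adj2 : M2 →ₗ[ℝ] M2 where
  toFun M := !![M 1 1, -(M 0 1); -(M 1 0), M 0 0]
  map_add' A B := by ext i j; fin_cases i <;> fin_cases j <;> simp <;> ring
  map_smul' c A := by ext i j; fin_cases i <;> fin_cases j <;> simp <;> ring

lemma adj2_apply (M : M2) : adj2 M = !![M 1 1, -(M 0 1); -(M 1 0), M 0 0] := rfl

lemma adj2_norm_le (M : M2) : ‖adj2 M‖ ≤ ‖M‖ := by
  rw [M2.norm_le_iff (norm_nonneg _)]
  intro i j
  fin_cases i <;> fin_cases j <;>
    · simp only [adj2_apply]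
      first
      | simpa using M2.entry_le M 1 1
      | simpa using M2.entry_le M 0 1
      | simpa using M2.entry_le M 1 0
      | simpa using M2.entry_le M 0 0

/-- adjugate as a continuous linear map -/
def adj2CLM : M2 →L[ℝ] M2 := adj2.mkContinuous 1 (fun M => by simpa using adj2_norm_le M)

@[simp] lemma adj2CLM_apply (M : M2) : adj2CLM M = adj2 M := rfl

lemma mul_adj2 (M : M2) : M * adj2 M = M.det • 1 := by
  ext i j
  fin_cases i <;> fin_cases j <;>
    simp [adj2_apply, Matrix.mul_apply, Fin.sum_univ_two, Matrix.det_fin_two,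
      Matrix.one_apply] <;> ring

lemma adj2_mul (M : M2) : adj2 M * M = M.det • 1 := by
  ext i j
  fin_cases i <;> fin_cases j <;>
    simp [adj2_apply, Matrix.mul_apply, Fin.sum_univ_two, Matrix.det_fin_two,
      Matrix.one_apply] <;> ring

lemma adj2_one : adj2 (1 : M2) = 1 := by
  ext i j
  fin_cases i <;> fin_cases j <;> simp [adj2_apply, Matrix.one_apply]

lemma adj2_A_mul (x : ℝ) (M : M2) :
    adj2 (!![0, 1; x, 0] * M) = -(adj2 M * !![0, 1; x, 0]) := by
  ext i j
  fin_cases i <;> fin_cases j <;>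
    simp [adj2_apply, Matrix.mul_apply, Matrix.vecMul, dotProduct,
      Fin.sum_univ_two] <;> ring

/-- entry evaluation as a continuous linear map -/
def entryCLM (i j : Fin 2) : M2 →L[ℝ] ℝ :=
  LinearMap.mkContinuous
    { toFun := fun M => M i j, map_add' := fun _ _ => rfl, map_smul' := fun _ _ => rfl }
    1 (fun M => by show ‖M i j‖ ≤ 1 * ‖M‖; simpa using M2.entry_le M i j)

@[simp] lemma entryCLM_apply (i j : Fin 2) (M : M2) : entryCLM i j M = M i j := rfl
lemma hasDerivWithinAt_matrix {f : ℝ → M2} {f' : M2} {s : Set ℝ} {t : ℝ}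
    (h : ∀ i j, HasDerivWithinAt (fun r => f r i j) (f' i j) s t) :
    HasDerivWithinAt f f' s t :=
  hasDerivWithinAt_pi.2 fun i => hasDerivWithinAt_pi.2 fun j => h i j

lemma HasDerivWithinAt.matMul {u v : ℝ → M2} {u' v' : M2} {s : Set ℝ} {t : ℝ}
    (hu : HasDerivWithinAt u u' s t) (hv : HasDerivWithinAt v v' s t) :
    HasDerivWithinAt (fun r => u r * v r) (u t * v' + u' * v t) s t := by
  have h := (mulCLM.isBoundedBilinearMap.hasFDerivAt (u t, v t)).comp_hasDerivWithinAt t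
    (hu.prodMk hv)
  simpa [Function.comp_def] using h
lemma clamp_coe {t : ℝ} (ht : t ∈ Icc (0:ℝ) (2*π)) : (clamp t : ℝ) = t := by
  rw [clamp, Set.projIcc_of_mem _ ht]

lemma continuous_clamp : Continuous clamp := by
  unfold clamp; exact continuous_projIcc

abbrev XX : Type := C(Icc (0:ℝ) (2*π), ℝ)
abbrev YY : Type := C(Icc (0:ℝ) (2*π), M2)

def Amat (p : XX) (t : ℝ) : M2 := !![0, 1; p (clamp t), 0]

lemma Amat_norm_le (p : XX) (t : ℝ) : ‖Amat p t‖ ≤ 1 + ‖p‖ := by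
  have hp : ‖p (clamp t)‖ ≤ ‖p‖ := p.norm_coe_le_norm _
  rw [M2.norm_le_iff (by positivity)]
  intro i j
  have hp' : |p (clamp t)| ≤ ‖p‖ := by rwa [Real.norm_eq_abs] at hp
  fin_cases i <;> fin_cases j <;> simp [Amat] <;> first | positivity | linarith

lemma continuous_Amat (p : XX) : Continuous (Amat p) := by
  apply continuous_pi; intro i; apply continuous_pi; intro j
  fin_cases i <;> fin_cases j <;> simp [Amat]
  · exact continuous_const
  · exact continuous_const
  · exact p.continuous.comp continuous_clamp
  · exact continuous_const

lemma Amat_sub (p p' : XX) (t : ℝ) :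
    Amat p' t - Amat p t = (p' (clamp t) - p (clamp t)) • N0 := by
  ext i j
  fin_cases i <;> fin_cases j <;> simp [Amat, N0] <;> ring
def SolHyp (p : XX) (f : ℝ → M2) : Prop :=
  f 0 = 1 ∧ ∀ t ∈ Icc (0:ℝ) (2*π), HasDerivWithinAt f (Amat p t * f t) (Icc 0 (2*π)) t

namespace SolHyp

variable {p p' : XX} {f g : ℝ → M2}

lemma continuousOn (hs : SolHyp p f) : ContinuousOn f (Icc (0:ℝ) (2*π)) :=
  fun t ht => (hs.2 t ht).continuousWithinAt

lemma deriv_Ici (hs : SolHyp p f) :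
    ∀ t ∈ Ico (0:ℝ) (2*π), HasDerivWithinAt f (Amat p t * f t) (Ici t) t :=
  fun t ht => (hs.2 t ⟨ht.1, ht.2.le⟩).mono_of_mem_nhdsWithin (Icc_mem_nhdsGE_of_mem ht)

lemma deriv_Ioi (hs : SolHyp p f) :
    ∀ t ∈ Ioo (0:ℝ) (2*π), HasDerivWithinAt f (Amat p t * f t) (Ioi t) t :=
  fun t ht => (hs.2 t ⟨ht.1.le, ht.2.le⟩).mono_of_mem_nhdsWithin
    (Icc_mem_nhdsGT_of_mem ⟨ht.1.le, ht.2⟩)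

lemma norm_le (hs : SolHyp p f) :
    ∀ t ∈ Icc (0:ℝ) (2*π), ‖f t‖ ≤ exp ((2*(1+‖p‖))*(2*π)) := by
  intro t ht
  have K0 : (0:ℝ) ≤ 2*(1+‖p‖) := by positivity
  have h := norm_le_gronwallBound_of_norm_deriv_right_le (f := f)
    (f' := fun t => Amat p t * f t) (δ := 1) (K := 2*(1+‖p‖)) (ε := 0) (a := 0) (b := 2*π)
    hs.continuousOn hs.deriv_Ici (by rw [hs.1]; exact M2.norm_one_le)
    (fun x _ => by
      have h1 := M2.norm_mul_le (Amat p x) (f x)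
      have h2 := Amat_norm_le p x
      have h3 := norm_nonneg (f x)
      nlinarith)
  have h4 := h t ht
  rw [gronwallBound_ε0] at h4
  refine h4.trans ?_
  rw [one_mul, exp_le_exp, sub_zero]
  exact mul_le_mul_of_nonneg_left ht.2 K0

lemma entry_deriv (hs : SolHyp p f) {t : ℝ} (ht : t ∈ Icc (0:ℝ) (2*π)) (i j : Fin 2) :
    HasDerivWithinAt (fun s => f s i j) ((Amat p t * f t) i j) (Icc 0 (2*π)) t :=
  (entryCLM i j).hasFDerivAt.comp_hasDerivWithinAt t (hs.2 t ht)

lemma det_one (hs : SolHyp p f) : ∀ t ∈ Icc (0:ℝ) (2*π), (f t).det = 1 := by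
  have hA0 : ∀ t (j : Fin 2), (Amat p t * f t) 0 j = f t 1 j := by
    intro t j; simp [Amat, Matrix.mul_apply, Fin.sum_univ_two]
  have hA1 : ∀ t (j : Fin 2), (Amat p t * f t) 1 j = p (clamp t) * f t 0 j := by
    intro t j; simp [Amat, Matrix.mul_apply, Fin.sum_univ_two]
  set d : ℝ → ℝ := fun t => f t 0 0 * f t 1 1 - f t 0 1 * f t 1 0 with hd
  have hcont : ContinuousOn d (Icc (0:ℝ) (2*π)) := by
    have hc : ∀ i j : Fin 2, ContinuousOn (fun s => f s i j) (Icc (0:ℝ) (2*π)) :=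
      fun i j => (entryCLM i j).continuous.comp_continuousOn hs.continuousOn
    exact ((hc 0 0).mul (hc 1 1)).sub ((hc 0 1).mul (hc 1 0))
  have hder : ∀ x ∈ Ico (0:ℝ) (2*π), HasDerivWithinAt d 0 (Ici x) x := by
    intro x hx
    have hx' : x ∈ Icc (0:ℝ) (2*π) := ⟨hx.1, hx.2.le⟩
    have h := (((hs.entry_deriv hx' 0 0).mul (hs.entry_deriv hx' 1 1)).sub
      ((hs.entry_deriv hx' 0 1).mul (hs.entry_deriv hx' 1 0)))
    have heq : (Amat p x * f x) 0 0 * f x 1 1 + f x 0 0 * (Amat p x * f x) 1 1 -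
        ((Amat p x * f x) 0 1 * f x 1 0 + f x 0 1 * (Amat p x * f x) 1 0) = 0 := by
      rw [hA0, hA0, hA1, hA1]; ring
    rw [heq] at h
    exact h.mono_of_mem_nhdsWithin (Icc_mem_nhdsGE_of_mem hx)
  intro t ht
  have h := constant_of_has_deriv_right_zero hcont hder t ht
  have h0 : d 0 = 1 := by simp [hd, hs.1, Matrix.one_apply]
  rw [Matrix.det_fin_two]
  rw [h0] at h
  exact h

end SolHyp
namespace SolHyp

variable {p p' : XX} {f g : ℝ → M2}

lemma duhamel (hs : SolHyp p f) (hs' : SolHyp p' g) :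
    ∀ T ∈ Icc (0:ℝ) (2*π),
      g T = f T + f T *
        ∫ s in (0:ℝ)..T, (p' (clamp s) - p (clamp s)) • (adj2 (f s) * N0 * g s) := by
  set D : ℝ → M2 := fun t => adj2 (f t) * g t with hD
  set D' : ℝ → M2 :=
    fun t => (p' (clamp t) - p (clamp t)) • (adj2 (f t) * N0 * g t) with hD'
  have hDder : ∀ t ∈ Icc (0:ℝ) (2*π), HasDerivWithinAt D (D' t) (Icc 0 (2*π)) t := by
    intro t ht
    have hadj : HasDerivWithinAt (fun s => adj2 (f s)) (adj2 (Amat p t * f t))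
        (Icc 0 (2*π)) t := by
      have := adj2CLM.hasFDerivAt.comp_hasDerivWithinAt t (hs.2 t ht)
      simpa [Function.comp_def] using this
    have hadj' : HasDerivWithinAt (fun s => adj2 (f s)) (-(adj2 (f t) * Amat p t))
        (Icc 0 (2*π)) t := by
      rwa [show adj2 (Amat p t * f t) = -(adj2 (f t) * Amat p t) from adj2_A_mul _ _] at hadj
    have h := hadj'.matMul (hs'.2 t ht)
    have heq : adj2 (f t) * (Amat p' t * g t) + -(adj2 (f t) * Amat p t) * g t = D' t := by
      have e1 : adj2 (f t) * (Amat p' t * g t) + -(adj2 (f t) * Amat p t) * g t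
          = adj2 (f t) * ((Amat p' t - Amat p t) * g t) := by noncomm_ring
      rw [hD', e1, Amat_sub, smul_mul_assoc, mul_smul_comm, ← mul_assoc]
    rwa [heq] at h
  have hcD : ContinuousOn D (Icc (0:ℝ) (2*π)) := fun t ht => (hDder t ht).continuousWithinAt
  have hcD' : ContinuousOn D' (Icc (0:ℝ) (2*π)) := by
    have hc1 : ContinuousOn (fun t => p' (clamp t) - p (clamp t)) (Icc (0:ℝ) (2*π)) :=
      ((p'.continuous.comp continuous_clamp).sub
        (p.continuous.comp continuous_clamp)).continuousOn
    have hc2 : ContinuousOn (fun t => adj2 (f t) * N0 * g t) (Icc (0:ℝ) (2*π)) := by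
      have hadjc : ContinuousOn (fun t => adj2 (f t) * N0) (Icc (0:ℝ) (2*π)) := by
        have := (mulCLM.flip N0).continuous.comp_continuousOn
          (adj2CLM.continuous.comp_continuousOn hs.continuousOn)
        simpa [Function.comp_def] using this
      exact (mulCLM.isBoundedBilinearMap.continuous).comp_continuousOn
        (hadjc.prodMk hs'.continuousOn)
    exact hc1.smul hc2
  intro T hT
  have hT0 : (0:ℝ) ≤ T := hT.1
  have hsub : Icc (0:ℝ) T ⊆ Icc (0:ℝ) (2*π) := Icc_subset_Icc le_rfl hT.2
  have hftc : ∫ s in (0:ℝ)..T, D' s = D T - D 0 := by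
    apply intervalIntegral.integral_eq_sub_of_hasDeriv_right_of_le hT0 (hcD.mono hsub)
    · intro x hx
      have hx' : x ∈ Icc (0:ℝ) (2*π) := hsub ⟨hx.1.le, hx.2.le⟩
      exact (hDder x hx').mono_of_mem_nhdsWithin
        (Icc_mem_nhdsGT_of_mem ⟨hx.1.le, lt_of_lt_of_le hx.2 hT.2⟩)
    · exact ContinuousOn.intervalIntegrable (by rw [uIcc_of_le hT0]; exact hcD'.mono hsub)
  have hD0 : D 0 = 1 := by rw [hD]; simp [hs.1, hs'.1, adj2_one]
  rw [hD0] at hftc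
  have hDT : D T = 1 + ∫ s in (0:ℝ)..T, D' s := by rw [hftc]; abel
  have hmain : f T * D T = g T := by
    rw [hD, ← mul_assoc, mul_adj2, hs.det_one T hT, one_smul, one_mul]
  rw [← hmain, hDT, mul_add, mul_one]

end SolHyp
/-- pointwise multiplication on `YY` as a continuous bilinear map -/
def mulYY : YY →L[ℝ] YY →L[ℝ] YY :=
  LinearMap.mkContinuous₂
    (LinearMap.mk₂ ℝ
      (fun u v => ContinuousMap.mk (fun t => u t * v t)
        ((mulCLM.isBoundedBilinearMap.continuous).comp (u.continuous.prodMk v.continuous)))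
      (fun u u' v => by
        refine ContinuousMap.ext fun t => ?_
        simp only [ContinuousMap.coe_mk, ContinuousMap.add_apply]
        exact add_mul _ _ _)
      (fun c u v => by
        refine ContinuousMap.ext fun t => ?_
        simp only [ContinuousMap.coe_mk, ContinuousMap.smul_apply]
        exact smul_mul_assoc _ _ _)
      (fun u v v' => by
        refine ContinuousMap.ext fun t => ?_
        simp only [ContinuousMap.coe_mk, ContinuousMap.add_apply]
        exact mul_add _ _ _)
      (fun c u v => by
        refine ContinuousMap.ext fun t => ?_
        simp only [ContinuousMap.coe_mk, ContinuousMap.smul_apply]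
        exact mul_smul_comm _ _ _))
    2
    (fun u v => by
      apply (ContinuousMap.norm_le _ (by positivity)).2
      intro t
      refine (M2.norm_mul_le _ _).trans ?_
      have h1 := u.norm_coe_le_norm t
      have h2 := v.norm_coe_le_norm t
      have := norm_nonneg (u t); have := norm_nonneg (v t)
      nlinarith)

@[simp] lemma mulYY_apply (u v : YY) (t : Icc (0:ℝ) (2*π)) : mulYY u v t = u t * v t := rfl

/-- postcomposition with a fixed continuous linear map on `M2` -/
def postcompCLM (T : M2 →L[ℝ] M2) : YY →L[ℝ] YY :=
  LinearMap.mkContinuous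
    { toFun := fun g => ContinuousMap.mk (fun t => T (g t)) (T.continuous.comp g.continuous)
      map_add' := fun g h => by
        refine ContinuousMap.ext fun t => ?_
        simp only [ContinuousMap.coe_mk, ContinuousMap.add_apply]
        exact T.map_add _ _
      map_smul' := fun c g => by
        refine ContinuousMap.ext fun t => ?_
        simp only [ContinuousMap.coe_mk, ContinuousMap.smul_apply, RingHom.id_apply]
        exact T.map_smul _ _ }
    ‖T‖
    (fun g => by
      apply (ContinuousMap.norm_le _ (by positivity)).2
      intro t
      exact (T.le_opNorm _).trans (by gcongr; exact g.norm_coe_le_norm t))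

@[simp] lemma postcompCLM_apply (T : M2 →L[ℝ] M2) (g : YY) (t : Icc (0:ℝ) (2*π)) :
    postcompCLM T g t = T (g t) := rfl
def intgd (w : XX) (g : YY) : ℝ → M2 := fun s => w (clamp s) • g (clamp s)

lemma intgd_continuous (w : XX) (g : YY) : Continuous (intgd w g) :=
  ((w.continuous.comp continuous_clamp).smul (g.continuous.comp continuous_clamp))

def intCM (w : XX) (g : YY) : YY :=
  ContinuousMap.mk (fun t => ∫ s in (0:ℝ)..(t:ℝ), intgd w g s)
    ((intervalIntegral.continuous_primitive
      (fun a b => (intgd_continuous w g).intervalIntegrable a b) 0).comp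
      continuous_subtype_val)

@[simp] lemma intCM_apply (w : XX) (g : YY) (t : Icc (0:ℝ) (2*π)) :
    intCM w g t = ∫ s in (0:ℝ)..(t:ℝ), intgd w g s := rfl

lemma intCM_add_left (w w' : XX) (g : YY) : intCM (w + w') g = intCM w g + intCM w' g := by
  refine ContinuousMap.ext fun t => ?_
  simp only [intCM_apply, ContinuousMap.add_apply]
  rw [← intervalIntegral.integral_add ((intgd_continuous w g).intervalIntegrable _ _)
    ((intgd_continuous w' g).intervalIntegrable _ _)]
  apply intervalIntegral.integral_congr
  intro s _
  simp only [intgd, ContinuousMap.add_apply, Pi.add_apply]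
  rw [add_smul]

lemma intCM_smul_left (c : ℝ) (w : XX) (g : YY) : intCM (c • w) g = c • intCM w g := by
  refine ContinuousMap.ext fun t => ?_
  simp only [intCM_apply, ContinuousMap.smul_apply]
  rw [← intervalIntegral.integral_smul]
  apply intervalIntegral.integral_congr
  intro s _
  simp only [intgd, ContinuousMap.smul_apply, Pi.smul_apply, smul_eq_mul]
  rw [mul_smul]

lemma intCM_add_right (w : XX) (g g' : YY) : intCM w (g + g') = intCM w g + intCM w g' := by
  refine ContinuousMap.ext fun t => ?_
  simp only [intCM_apply, ContinuousMap.add_apply]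
  rw [← intervalIntegral.integral_add ((intgd_continuous w g).intervalIntegrable _ _)
    ((intgd_continuous w g').intervalIntegrable _ _)]
  apply intervalIntegral.integral_congr
  intro s _
  simp only [intgd, ContinuousMap.add_apply]
  rw [smul_add]

lemma intCM_smul_right (c : ℝ) (w : XX) (g : YY) : intCM w (c • g) = c • intCM w g := by
  refine ContinuousMap.ext fun t => ?_
  simp only [intCM_apply, ContinuousMap.smul_apply]
  rw [← intervalIntegral.integral_smul]
  apply intervalIntegral.integral_congr
  intro s _
  simp only [intgd, ContinuousMap.smul_apply]
  rw [smul_comm]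

lemma intCM_norm_le (w : XX) (g : YY) : ‖intCM w g‖ ≤ 2 * π * ‖w‖ * ‖g‖ := by
  apply (ContinuousMap.norm_le _ (by positivity)).2
  intro t
  simp only [intCM_apply]
  have h := intervalIntegral.norm_integral_le_of_norm_le_const (C := ‖w‖ * ‖g‖)
    (a := 0) (b := (t:ℝ)) (f := intgd w g) ?_
  · refine h.trans ?_
    have h1 : |(t:ℝ) - 0| ≤ 2 * π := by
      rw [sub_zero, abs_of_nonneg t.2.1]; exact t.2.2
    have h2 : (0:ℝ) ≤ ‖w‖ * ‖g‖ := by positivity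
    nlinarith
  · intro x _
    simp only [intgd]
    rw [norm_smul]
    exact mul_le_mul (w.norm_coe_le_norm _) (g.norm_coe_le_norm _) (norm_nonneg _)
      (norm_nonneg _)

/-- the basic integral operator, as a continuous bilinear map -/
def intOpCLM : XX →L[ℝ] YY →L[ℝ] YY :=
  LinearMap.mkContinuous₂
    (LinearMap.mk₂ ℝ intCM intCM_add_left intCM_smul_left intCM_add_right intCM_smul_right)
    (2 * π)
    (fun w g => by simpa [mul_assoc] using intCM_norm_le w g)

@[simp] lemma intOpCLM_apply (w : XX) (g : YY) : intOpCLM w g = intCM w g := rfl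
def adjN0CLM : M2 →L[ℝ] M2 := (mulCLM.flip N0).comp adj2CLM

@[simp] lemma adjN0CLM_apply (m : M2) : adjN0CLM m = adj2 m * N0 := rfl

/-- the candidate derivative of the solution map -/
def Fder (u : YY) : XX →L[ℝ] YY :=
  (mulYY u).comp (intOpCLM.flip (mulYY (postcompCLM adjN0CLM u) u))

lemma Fder_apply (u : YY) (w : XX) (t : Icc (0:ℝ) (2*π)) :
    Fder u w t = u t *
      ∫ s in (0:ℝ)..(t:ℝ), w (clamp s) • (adj2 (u (clamp s)) * N0 * u (clamp s)) := rfl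

lemma Fder_contDiff : ContDiff ℝ (⊤ : ℕ∞) Fder := by
  have h2 : ContDiff ℝ (⊤ : ℕ∞) fun u : YY => mulYY (postcompCLM adjN0CLM u) u := by
    have hb : IsBoundedBilinearMap ℝ fun p : YY × YY => mulYY p.1 p.2 :=
      mulYY.isBoundedBilinearMap
    exact hb.contDiff.comp ((postcompCLM adjN0CLM).contDiff.prodMk contDiff_id)
  have h3 : ContDiff ℝ (⊤ : ℕ∞)
      fun u : YY => intOpCLM.flip (mulYY (postcompCLM adjN0CLM u) u) :=
    ContDiff.comp (g := fun v : YY => intOpCLM.flip v)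
      (f := fun u : YY => mulYY (postcompCLM adjN0CLM u) u) (by exact ContinuousLinearMap.contDiff (𝕜 := ℝ) (E := YY) (F := XX →L[ℝ] YY) intOpCLM.flip) h2
  have h1 : ContDiff ℝ (⊤ : ℕ∞) fun u : YY => mulYY u :=
    ContinuousLinearMap.contDiff (𝕜 := ℝ) (E := YY) (F := YY →L[ℝ] YY) mulYY
  exact h1.clm_comp h3

def endT : Icc (0:ℝ) (2*π) := ⟨2*π, ⟨by positivity, le_refl _⟩⟩

def evalEnd : YY →L[ℝ] M2 := ContinuousMap.evalCLM ℝ endT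

@[simp] lemma evalEnd_apply (g : YY) : evalEnd g = g endT := rfl
def Mbnd (r : ℝ) : ℝ := exp ((2*(1+r))*(2*π))

lemma Mbnd_pos (r : ℝ) : 0 < Mbnd r := exp_pos _

lemma Mbnd_mono {r r' : ℝ} (h : r ≤ r') : Mbnd r ≤ Mbnd r' := by
  apply exp_le_exp.2
  have : (0:ℝ) < 2*π := by positivity
  nlinarith

def K1 (r : ℝ) : ℝ := 2 * Mbnd r * ((‖(1:ℝ)‖) * (4 * Mbnd r * Mbnd (r+1)) * (2*π))

def Cbnd (r : ℝ) : ℝ := 2 * Mbnd r * ((4 * Mbnd r * K1 r) * (2*π))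

lemma K1_nonneg (r : ℝ) : 0 ≤ K1 r := by
  have := Mbnd_pos r; have := Mbnd_pos (r+1); unfold K1; positivity

lemma Cbnd_nonneg (r : ℝ) : 0 ≤ Cbnd r := by
  have := Mbnd_pos r; have := K1_nonneg r; unfold Cbnd; positivity

namespace SolHyp

variable {p p' : XX} {f g : ℝ → M2}

lemma cont_integrand (hf : ContinuousOn f (Icc (0:ℝ) (2*π)))
    (hg : ContinuousOn g (Icc (0:ℝ) (2*π))) :
    ContinuousOn (fun s => (p' (clamp s) - p (clamp s)) • (adj2 (f s) * N0 * g s))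
      (Icc (0:ℝ) (2*π)) := by
  have hc1 : ContinuousOn (fun t => p' (clamp t) - p (clamp t)) (Icc (0:ℝ) (2*π)) :=
    ((p'.continuous.comp continuous_clamp).sub (p.continuous.comp continuous_clamp)).continuousOn
  have hadjc : ContinuousOn (fun t => adj2 (f t) * N0) (Icc (0:ℝ) (2*π)) := by
    have := (mulCLM.flip N0).continuous.comp_continuousOn
      (adj2CLM.continuous.comp_continuousOn hf)
    simpa [Function.comp_def] using this
  have hc2 : ContinuousOn (fun t => adj2 (f t) * N0 * g t) (Icc (0:ℝ) (2*π)) :=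
    (mulCLM.isBoundedBilinearMap.continuous).comp_continuousOn (hadjc.prodMk hg)
  exact hc1.smul hc2

lemma norm_triple_le {x y : M2} {Mx My : ℝ} (hx : ‖x‖ ≤ Mx) (hy : ‖y‖ ≤ My)
    (hMx : 0 ≤ Mx) (hMy : 0 ≤ My) : ‖adj2 x * N0 * y‖ ≤ 4 * Mx * My := by
  have h1 := M2.norm_mul_le (adj2 x * N0) y
  have h2 := M2.norm_mul_le (adj2 x) N0
  have h3 := adj2_norm_le x
  have h4 := N0_norm_le
  have h5 := norm_nonneg (adj2 x * N0)
  have h6 := norm_nonneg (adj2 x)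
  have h7 := norm_nonneg y
  have h8 := norm_nonneg x
  have hA : ‖adj2 x * N0‖ ≤ 2 * ‖x‖ := by nlinarith
  calc ‖adj2 x * N0 * y‖ ≤ 2 * ‖adj2 x * N0‖ * ‖y‖ := h1
    _ ≤ 2 * (2 * ‖x‖) * ‖y‖ := by nlinarith
    _ ≤ 4 * Mx * My := by nlinarith [mul_le_mul hx hy h7 hMx]

lemma dist_le (hs : SolHyp p f) (hs' : SolHyp p' g) (hnear : ‖p' - p‖ ≤ 1) :
    ∀ s ∈ Icc (0:ℝ) (2*π), ‖g s - f s‖ ≤ K1 ‖p‖ * ‖p' - p‖ := by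
  have hMf : ∀ s ∈ Icc (0:ℝ) (2*π), ‖f s‖ ≤ Mbnd ‖p‖ := hs.norm_le
  have hp'n : ‖p'‖ ≤ ‖p‖ + 1 := by
    have h := norm_sub_norm_le p' p
    linarith
  have hMg : ∀ s ∈ Icc (0:ℝ) (2*π), ‖g s‖ ≤ Mbnd (‖p‖+1) :=
    fun s hsI => (hs'.norm_le s hsI).trans (Mbnd_mono hp'n)
  have hc : ∀ s : ℝ, ‖p' (clamp s) - p (clamp s)‖ ≤ ‖p' - p‖ := fun s => by
    have := (p' - p).norm_coe_le_norm (clamp s)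
    simpa [ContinuousMap.sub_apply] using this
  intro s hsI
  have hdu := hs.duhamel hs' s hsI
  have hgf : g s - f s = f s *
      ∫ x in (0:ℝ)..s, (p' (clamp x) - p (clamp x)) • (adj2 (f x) * N0 * g x) := by
    rw [hdu]; abel
  rw [hgf]
  have hIb : ‖∫ x in (0:ℝ)..s, (p' (clamp x) - p (clamp x)) • (adj2 (f x) * N0 * g x)‖
      ≤ (‖p' - p‖ * (4 * Mbnd ‖p‖ * Mbnd (‖p‖+1))) * |s - 0| := by
    apply intervalIntegral.norm_integral_le_of_norm_le_const
    intro x hx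
    have hxI : x ∈ Icc (0:ℝ) (2*π) := by
      rw [uIoc_of_le hsI.1] at hx
      exact ⟨hx.1.le, hx.2.trans hsI.2⟩
    rw [norm_smul]
    exact mul_le_mul (hc x)
      (norm_triple_le (hMf x hxI) (hMg x hxI) (Mbnd_pos _).le (Mbnd_pos _).le)
      (norm_nonneg _) (norm_nonneg _)
  have habs : |s - 0| ≤ 2*π := by rw [sub_zero, abs_of_nonneg hsI.1]; exact hsI.2
  have h1 := M2.norm_mul_le (f s)
    (∫ x in (0:ℝ)..s, (p' (clamp x) - p (clamp x)) • (adj2 (f x) * N0 * g x))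
  refine h1.trans ?_
  have hfs := hMf s hsI
  have hMb := Mbnd_pos ‖p‖
  have hMb1 := Mbnd_pos (‖p‖+1)
  have hnn : (0:ℝ) ≤ ‖p' - p‖ := norm_nonneg _
  have hIf := norm_nonneg (∫ x in (0:ℝ)..s, (p' (clamp x) - p (clamp x)) • (adj2 (f x) * N0 * g x))
  have hfn := norm_nonneg (f s)
  have hpi : (0:ℝ) < 2*π := by positivity
  have key : ‖∫ x in (0:ℝ)..s, (p' (clamp x) - p (clamp x)) • (adj2 (f x) * N0 * g x)‖
      ≤ (‖p' - p‖ * (4 * Mbnd ‖p‖ * Mbnd (‖p‖+1))) * (2*π) := by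
    refine hIb.trans ?_
    have : (0:ℝ) ≤ ‖p' - p‖ * (4 * Mbnd ‖p‖ * Mbnd (‖p‖+1)) := by positivity
    nlinarith
  unfold K1
  simp only [norm_one]
  nlinarith

end SolHyp
namespace SolHyp

variable {p p' : XX} {f g : ℝ → M2}

lemma approx (hs : SolHyp p f) (hs' : SolHyp p' g) (hnear : ‖p' - p‖ ≤ 1) :
    ∀ T ∈ Icc (0:ℝ) (2*π),
      ‖g T - f T - f T * ∫ s in (0:ℝ)..T,
          (p' (clamp s) - p (clamp s)) • (adj2 (f s) * N0 * f s)‖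
        ≤ Cbnd ‖p‖ * ‖p' - p‖ ^ 2 := by
  have hMf : ∀ s ∈ Icc (0:ℝ) (2*π), ‖f s‖ ≤ Mbnd ‖p‖ := hs.norm_le
  have hdist := hs.dist_le hs' hnear
  have hc : ∀ s : ℝ, ‖p' (clamp s) - p (clamp s)‖ ≤ ‖p' - p‖ := fun s => by
    have := (p' - p).norm_coe_le_norm (clamp s)
    simpa [ContinuousMap.sub_apply] using this
  intro T hT
  have hT0 : (0:ℝ) ≤ T := hT.1
  have hsub : Icc (0:ℝ) T ⊆ Icc (0:ℝ) (2*π) := Icc_subset_Icc le_rfl hT.2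
  have hint1 : IntervalIntegrable
      (fun s => (p' (clamp s) - p (clamp s)) • (adj2 (f s) * N0 * g s)) MeasureTheory.volume 0 T := by
    apply ContinuousOn.intervalIntegrable
    rw [uIcc_of_le hT0]
    exact (cont_integrand (p := p) (p' := p') hs.continuousOn hs'.continuousOn).mono hsub
  have hint2 : IntervalIntegrable
      (fun s => (p' (clamp s) - p (clamp s)) • (adj2 (f s) * N0 * f s)) MeasureTheory.volume 0 T := by
    apply ContinuousOn.intervalIntegrable
    rw [uIcc_of_le hT0]
    exact (cont_integrand (p := p) (p' := p') hs.continuousOn hs.continuousOn).mono hsub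
  have hdu := hs.duhamel hs' T hT
  have hgf : g T - f T - f T * (∫ s in (0:ℝ)..T,
      (p' (clamp s) - p (clamp s)) • (adj2 (f s) * N0 * f s)) =
      f T * ∫ s in (0:ℝ)..T,
        (p' (clamp s) - p (clamp s)) • (adj2 (f s) * N0 * (g s - f s)) := by
    rw [hdu]
    have hsplit : (∫ s in (0:ℝ)..T, (p' (clamp s) - p (clamp s)) • (adj2 (f s) * N0 * g s)) -
        (∫ s in (0:ℝ)..T, (p' (clamp s) - p (clamp s)) • (adj2 (f s) * N0 * f s)) =
        ∫ s in (0:ℝ)..T, (p' (clamp s) - p (clamp s)) • (adj2 (f s) * N0 * (g s - f s)) := by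
      rw [← intervalIntegral.integral_sub hint1 hint2]
      apply intervalIntegral.integral_congr
      intro x _
      show _ - _ = _
      rw [← smul_sub, ← mul_sub]
    rw [← hsplit]
    rw [mul_sub]
    abel
  rw [hgf]
  have hIb : ‖∫ s in (0:ℝ)..T,
      (p' (clamp s) - p (clamp s)) • (adj2 (f s) * N0 * (g s - f s))‖
      ≤ (‖p' - p‖ * (4 * Mbnd ‖p‖ * (K1 ‖p‖ * ‖p' - p‖))) * |T - 0| := by
    apply intervalIntegral.norm_integral_le_of_norm_le_const
    intro x hx
    have hxI : x ∈ Icc (0:ℝ) (2*π) := by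
      rw [uIoc_of_le hT0] at hx
      exact ⟨hx.1.le, hx.2.trans hT.2⟩
    rw [norm_smul]
    refine mul_le_mul (hc x)
      (norm_triple_le (hMf x hxI) (hdist x hxI) (Mbnd_pos _).le ?_)
      (norm_nonneg _) (norm_nonneg _)
    exact mul_nonneg (K1_nonneg _) (norm_nonneg _)
  have habs : |T - 0| ≤ 2*π := by rw [sub_zero, abs_of_nonneg hT0]; exact hT.2
  have h1 := M2.norm_mul_le (f T) (∫ s in (0:ℝ)..T,
      (p' (clamp s) - p (clamp s)) • (adj2 (f s) * N0 * (g s - f s)))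
  refine h1.trans ?_
  have hfs := hMf T hT
  have hMb := Mbnd_pos ‖p‖
  have hK1 := K1_nonneg ‖p‖
  have hnn : (0:ℝ) ≤ ‖p' - p‖ := norm_nonneg _
  have hIf := norm_nonneg (∫ s in (0:ℝ)..T,
      (p' (clamp s) - p (clamp s)) • (adj2 (f s) * N0 * (g s - f s)))
  have hfn := norm_nonneg (f T)
  have hpi : (0:ℝ) < 2*π := by positivity
  have key : ‖∫ s in (0:ℝ)..T,
      (p' (clamp s) - p (clamp s)) • (adj2 (f s) * N0 * (g s - f s))‖
      ≤ (‖p' - p‖ * (4 * Mbnd ‖p‖ * (K1 ‖p‖ * ‖p' - p‖))) * (2*π) := by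
    refine hIb.trans ?_
    have : (0:ℝ) ≤ ‖p' - p‖ * (4 * Mbnd ‖p‖ * (K1 ‖p‖ * ‖p' - p‖)) := by positivity
    nlinarith
  unfold Cbnd
  nlinarith

end SolHyp
lemma inv_eq_adj2 {M : M2} (hdet : M.det = 1) : M⁻¹ = adj2 M := by
  rw [Matrix.inv_def, hdet, Ring.inverse_one, one_smul, Matrix.adjugate_fin_two, adj2_apply]


theorem stmt_4_aux
    -- `Φ q` is the fundamental matrix of the potential `q`:
    (Φ : C(Icc (0:ℝ) (2 * π), ℝ) → ℝ → Matrix (Fin 2) (Fin 2) ℝ)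
    (hΦ0 : ∀ q, Φ q 0 = 1)
    (hΦ : ∀ q, ∀ t ∈ Icc (0:ℝ) (2 * π), ∀ i j,
      HasDerivWithinAt (fun s => Φ q s i j)
        ((!![0, 1; q (clamp t), 0] * Φ q t) i j) (Icc 0 (2 * π)) t) :
    ContDiff ℝ (⊤ : ℕ∞) (fun q : C(Icc (0:ℝ) (2 * π), ℝ) => Φ q (2 * π)) ∧
    ∀ q : C(Icc (0:ℝ) (2 * π), ℝ),
      ∃ L : C(Icc (0:ℝ) (2 * π), ℝ) →L[ℝ] Matrix (Fin 2) (Fin 2) ℝ,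
        HasFDerivAt (fun q' => Φ q' (2 * π)) L q ∧
        ∀ w : C(Icc (0:ℝ) (2 * π), ℝ),
          L w = Φ q (2 * π) *
            Matrix.of (fun i j : Fin 2 =>
              ∫ t in (0:ℝ)..(2 * π), w (clamp t) * (((Φ q t)⁻¹ * N0 * Φ q t) i j)) := by
  have hsol : ∀ q : XX, SolHyp q (Φ q) := fun q =>
    ⟨hΦ0 q, fun t ht => hasDerivWithinAt_matrix (fun i j => hΦ q t ht i j)⟩
  set S : XX → YY := fun q => ContinuousMap.mk (fun t => Φ q ↑t)
    (continuousOn_iff_continuous_restrict.1 (hsol q).continuousOn) with hS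
  have hasF : ∀ q, HasFDerivAt S (Fder (S q)) q := by
    intro q
    rw [hasFDerivAt_iff_isLittleO_nhds_zero, Asymptotics.isLittleO_iff]
    intro c hc
    have hC := Cbnd_nonneg ‖q‖
    have hδ : 0 < min 1 (c / (Cbnd ‖q‖ + 1)) := lt_min one_pos (by positivity)
    filter_upwards [Metric.ball_mem_nhds 0 hδ] with h hh
    rw [Metric.mem_ball, dist_zero_right] at hh
    have hh1 : ‖h‖ ≤ 1 := le_of_lt (lt_of_lt_of_le hh (min_le_left _ _))
    have hh2 : ‖h‖ ≤ c / (Cbnd ‖q‖ + 1) := le_of_lt (lt_of_lt_of_le hh (min_le_right _ _))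
    have hqq : ‖(q + h) - q‖ = ‖h‖ := by rw [add_sub_cancel_left]
    have happ := (hsol q).approx (hsol (q + h)) (by rw [hqq]; exact hh1)
    have hpt : ∀ t : Icc (0:ℝ) (2*π),
        ‖(S (q + h) - S q - Fder (S q) h) t‖ ≤ (Cbnd ‖q‖ * ‖h‖) * ‖h‖ := by
      intro t
      have ht : (t:ℝ) ∈ Icc (0:ℝ) (2*π) := t.2
      have hFt : (Fder (S q) h) t = Φ q ↑t * ∫ s in (0:ℝ)..(t:ℝ),
          ((q + h) (clamp s) - q (clamp s)) • (adj2 (Φ q s) * N0 * Φ q s) := by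
        rw [Fder_apply]
        congr 1
        apply intervalIntegral.integral_congr
        intro x hx
        rw [uIcc_of_le ht.1] at hx
        have hxI : x ∈ Icc (0:ℝ) (2*π) := ⟨hx.1, hx.2.trans ht.2⟩
        have hcx : ((clamp x : ℝ)) = x := clamp_coe hxI
        simp [hS, hcx, ContinuousMap.add_apply]
        show _ • (adj2 (Φ q (clamp x : ℝ)) * N0 * Φ q (clamp x : ℝ)) = _
        rw [hcx]
      have hEt : (S (q + h) - S q - Fder (S q) h) t =
          Φ (q + h) ↑t - Φ q ↑t - Φ q ↑t * ∫ s in (0:ℝ)..(t:ℝ),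
            ((q + h) (clamp s) - q (clamp s)) • (adj2 (Φ q s) * N0 * Φ q s) := by
        rw [← hFt]
        simp [hS, ContinuousMap.sub_apply]
        rfl
      rw [hEt]
      refine (happ ↑t ht).trans ?_
      rw [hqq]
      have := norm_nonneg h
      nlinarith
    have hnorm : ‖S (q + h) - S q - Fder (S q) h‖ ≤ (Cbnd ‖q‖ * ‖h‖) * ‖h‖ :=
      (ContinuousMap.norm_le _ (by positivity)).2 hpt
    refine hnorm.trans ?_
    have hfin : Cbnd ‖q‖ * ‖h‖ ≤ c := by
      have h1 : Cbnd ‖q‖ * ‖h‖ ≤ Cbnd ‖q‖ * (c / (Cbnd ‖q‖ + 1)) :=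
        mul_le_mul_of_nonneg_left hh2 hC
      refine h1.trans ?_
      have h2 : Cbnd ‖q‖ * (c / (Cbnd ‖q‖ + 1)) ≤ (Cbnd ‖q‖ + 1) * (c / (Cbnd ‖q‖ + 1)) := by
        have : (0:ℝ) ≤ c / (Cbnd ‖q‖ + 1) := by positivity
        nlinarith
      refine h2.trans ?_
      rw [mul_div_cancel₀ _ (by positivity : (Cbnd ‖q‖ + 1) ≠ 0)]
    exact mul_le_mul_of_nonneg_right hfin (norm_nonneg h)
  have Sdiff : Differentiable ℝ S := fun q => (hasF q).differentiableAt
  have hfderiv : fderiv ℝ S = fun q => Fder (S q) := funext fun q => (hasF q).fderiv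
  have Scont : ∀ n : ℕ, ContDiff ℝ n S := by
    intro n
    induction n with
    | zero => exact contDiff_zero.2 Sdiff.continuous
    | succ n ih =>
      have hF : ContDiff ℝ n (fun q => Fder (S q)) :=
        (Fder_contDiff.of_le (by exact_mod_cast le_top)).comp ih
      have : ContDiff ℝ ((n : WithTop ℕ∞) + 1) S := by
        rw [contDiff_succ_iff_fderiv]
        refine ⟨Sdiff, by simp, ?_⟩
        rw [hfderiv]
        exact hF
      exact_mod_cast this
  have Stop : ContDiff ℝ (⊤ : ℕ∞) S := contDiff_infty.2 Scont
  have hEval : (fun q : XX => Φ q (2 * π)) = fun q => evalEnd (S q) := by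
    funext q; rfl
  constructor
  · rw [hEval]
    exact evalEnd.contDiff.comp Stop
  · intro q
    refine ⟨evalEnd.comp (Fder (S q)), ?_, ?_⟩
    · have := evalEnd.hasFDerivAt.comp q (hasF q)
      exact this
    · intro w
      have hdet := (hsol q).det_one
      have hFw : evalEnd.comp (Fder (S q)) w = Φ q (2 * π) *
          ∫ s in (0:ℝ)..(2*π), w (clamp s) • (adj2 (Φ q (↑(clamp s))) * N0 * Φ q (↑(clamp s))) := by
        rfl
      rw [hFw]
      congr 1
      ext i j
      rw [Matrix.of_apply]
      have hint : IntervalIntegrable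
          (fun s => w (clamp s) • (adj2 (Φ q (↑(clamp s))) * N0 * Φ q (↑(clamp s))))
          MeasureTheory.volume 0 (2*π) := by
        apply Continuous.intervalIntegrable
        have hc1 : Continuous fun s : ℝ => Φ q (↑(clamp s)) :=
          (continuousOn_iff_continuous_restrict.1 (hsol q).continuousOn).comp continuous_clamp
        have hc2 : Continuous fun s : ℝ => adj2 (Φ q (↑(clamp s))) * N0 :=
          (mulCLM.flip N0).continuous.comp (adj2CLM.continuous.comp hc1)
        exact (w.continuous.comp continuous_clamp).smul
          ((mulCLM.isBoundedBilinearMap.continuous).comp (hc2.prodMk hc1))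
      have hcomm := (entryCLM i j).intervalIntegral_comp_comm hint
      have : (∫ s in (0:ℝ)..(2*π),
          w (clamp s) • (adj2 (Φ q (↑(clamp s))) * N0 * Φ q (↑(clamp s)))) i j =
          ∫ s in (0:ℝ)..(2*π),
            (w (clamp s) • (adj2 (Φ q (↑(clamp s))) * N0 * Φ q (↑(clamp s)))) i j := by
        exact hcomm.symm
      rw [this]
      apply intervalIntegral.integral_congr
      intro x hx
      rw [uIcc_of_le (by positivity : (0:ℝ) ≤ 2*π)] at hx
      have hcx : ((clamp x : ℝ)) = x := clamp_coe hx
      show (w (clamp x) • (adj2 (Φ q ↑(clamp x)) * N0 * Φ q ↑(clamp x))) i j =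
        w (clamp x) * ((Φ q x)⁻¹ * N0 * Φ q x) i j
      rw [hcx, inv_eq_adj2 (hdet x hx)]
      simp [Matrix.smul_apply, smul_eq_mul]

end

/-- Proposition 2.1. The matrix-level monodromy map
`q ↦ Φ_q(2π)` on the Banach space `C([0,2π],ℝ)` is smooth (infinitely Fréchet
differentiable), with Fréchet derivative at `q` the continuous linear map
`w ↦ Φ_q(2π)·∫₀^{2π} w(t)·Φ_q(t)⁻¹·N₀·Φ_q(t) dt`. -/
theorem stmt_4
    -- `Φ q` is the fundamental matrix of the potential `q`:
    (Φ : C(Icc (0:ℝ) (2 * π), ℝ) → ℝ → Matrix (Fin 2) (Fin 2) ℝ)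
    (hΦ0 : ∀ q, Φ q 0 = 1)
    (hΦ : ∀ q, ∀ t ∈ Icc (0:ℝ) (2 * π), ∀ i j,
      HasDerivWithinAt (fun s => Φ q s i j)
        ((!![0, 1; q (clamp t), 0] * Φ q t) i j) (Icc 0 (2 * π)) t) :
    ContDiff ℝ (⊤ : ℕ∞) (fun q : C(Icc (0:ℝ) (2 * π), ℝ) => Φ q (2 * π)) ∧
    ∀ q : C(Icc (0:ℝ) (2 * π), ℝ),
      ∃ L : C(Icc (0:ℝ) (2 * π), ℝ) →L[ℝ] Matrix (Fin 2) (Fin 2) ℝ,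
        HasFDerivAt (fun q' => Φ q' (2 * π)) L q ∧
        ∀ w : C(Icc (0:ℝ) (2 * π), ℝ),
          L w = Φ q (2 * π) *
            Matrix.of (fun i j : Fin 2 =>
              ∫ t in (0:ℝ)..(2 * π), w (clamp t) * (((Φ q t)⁻¹ * N0 * Φ q t) i j)) := by
  exact stmt_4_aux Φ hΦ0 hΦ
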